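/- Let μ_β² be the probability measure on ℝ² with mixed moments M(2n_1,2n_2) = ((2n_1)!(2n_2)!(n_1+n_2)!)/(2^{n_1+n_2} n_1! n_2! Γ(β(n_1+n_2)+1)) and zero whenever an exponent is odd. Then ∫_{ℝ²} H_4^β(x) H_2^β(y) dμ_β²(x,y) = A(β)·(3Γ(2β+1)² − 3Γ(β+1)²Γ(2β+1) − Γ(β+1)Γ(3β+1)) where A(β) = 24/(Γ(2β+1)Γ(3β+1)(6Γ(β+1)² − Γ(2β+1))), H_2^β(y) = y² − 1/Γ(β+1), H_4^β(x) = x⁴ − c(β)x² + c(β)/Γ(β+1) − 6/Γ(2β+1), and c(β) = (90Γ(β+1)²Γ(2β+1) − 6Γ(β+1)Γ(3β+1))/(6Γ(β+1)²Γ(3β+1) − Γ(2β+1)Γ(3β+1)). -/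

import Mathlib

open MeasureTheory

/-- Let `μ_β²` be the two-dimensional Mittag-Leffler measure, with mixed moments
`M(2n₁,2n₂) = ((2n₁)!(2n₂)!(n₁+n₂)!)/(2^{n₁+n₂} n₁! n₂! Γ(β(n₁+n₂)+1))` and zero whenever
an exponent is odd. Then `∫ H₄^β(x) H₂^β(y) dμ_β² = A(β)·(3Γ(2β+1)² − 3Γ(β+1)²Γ(2β+1)
− Γ(β+1)Γ(3β+1))` with `A(β) = 24/(Γ(2β+1)Γ(3β+1)(6Γ(β+1)² − Γ(2β+1)))`, where
`H₂^β(y) = y² − 1/Γ(β+1)`, `H₄^β(x) = x⁴ − c(β)x² + c(β)/Γ(β+1) − 6/Γ(2β+1)` and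
`c(β) = (90Γ(β+1)²Γ(2β+1) − 6Γ(β+1)Γ(3β+1))/(6Γ(β+1)²Γ(3β+1) − Γ(2β+1)Γ(3β+1))`. -/
theorem H4_H2_pairing (β : ℝ) (hβ : 0 < β) (hβ1 : β ≤ 1)
    (hden1 : 6 * Real.Gamma (β + 1) ^ 2 - Real.Gamma (2 * β + 1) ≠ 0)
    (hden2 : 6 * Real.Gamma (β + 1) ^ 2 * Real.Gamma (3 * β + 1) -
      Real.Gamma (2 * β + 1) * Real.Gamma (3 * β + 1) ≠ 0)
    (μ : Measure (ℝ × ℝ)) [IsProbabilityMeasure μ]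
    (hint : ∀ m k : ℕ, Integrable (fun p : ℝ × ℝ => p.1 ^ m * p.2 ^ k) μ)
    (heven : ∀ n₁ n₂ : ℕ, ∫ p : ℝ × ℝ, p.1 ^ (2 * n₁) * p.2 ^ (2 * n₂) ∂μ =
      ((2 * n₁).factorial * (2 * n₂).factorial * (n₁ + n₂).factorial) /
        (2 ^ (n₁ + n₂) * n₁.factorial * n₂.factorial *
          Real.Gamma (β * (n₁ + n₂) + 1)))
    (hodd : ∀ m k : ℕ, Odd m ∨ Odd k →
      ∫ p : ℝ × ℝ, p.1 ^ m * p.2 ^ k ∂μ = 0) :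
    ∫ p : ℝ × ℝ,
        (p.1 ^ 4 -
          (90 * Real.Gamma (β + 1) ^ 2 * Real.Gamma (2 * β + 1) -
              6 * Real.Gamma (β + 1) * Real.Gamma (3 * β + 1)) /
            (6 * Real.Gamma (β + 1) ^ 2 * Real.Gamma (3 * β + 1) -
              Real.Gamma (2 * β + 1) * Real.Gamma (3 * β + 1)) * p.1 ^ 2 +
          (90 * Real.Gamma (β + 1) ^ 2 * Real.Gamma (2 * β + 1) -
              6 * Real.Gamma (β + 1) * Real.Gamma (3 * β + 1)) /
            (6 * Real.Gamma (β + 1) ^ 2 * Real.Gamma (3 * β + 1) -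
              Real.Gamma (2 * β + 1) * Real.Gamma (3 * β + 1)) / Real.Gamma (β + 1) -
          6 / Real.Gamma (2 * β + 1)) *
        (p.2 ^ 2 - 1 / Real.Gamma (β + 1)) ∂μ =
      24 / (Real.Gamma (2 * β + 1) * Real.Gamma (3 * β + 1) *
          (6 * Real.Gamma (β + 1) ^ 2 - Real.Gamma (2 * β + 1))) *
        (3 * Real.Gamma (2 * β + 1) ^ 2 -
          3 * Real.Gamma (β + 1) ^ 2 * Real.Gamma (2 * β + 1) -
          Real.Gamma (β + 1) * Real.Gamma (3 * β + 1)) := by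
  have hg1 : 0 < Real.Gamma (β + 1) := Real.Gamma_pos_of_pos (by linarith)
  have hg2 : 0 < Real.Gamma (2 * β + 1) := Real.Gamma_pos_of_pos (by linarith)
  have hg3 : 0 < Real.Gamma (3 * β + 1) := Real.Gamma_pos_of_pos (by linarith)
  set g1 := Real.Gamma (β + 1) with hg1def
  set g2 := Real.Gamma (2 * β + 1) with hg2def
  set g3 := Real.Gamma (3 * β + 1) with hg3def
  set c : ℝ := (90 * g1 ^ 2 * g2 - 6 * g1 * g3) / (6 * g1 ^ 2 * g3 - g2 * g3) with hc
  set d : ℝ := c / g1 - 6 / g2 with hd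
  set e : ℝ := 1 / g1 with he
  have h21 := heven 2 1
  have h20 := heven 2 0
  have h11 := heven 1 1
  have h10 := heven 1 0
  have h01 := heven 0 1
  have h00 := heven 0 0
  norm_num [Nat.factorial] at h21 h20 h11 h10 h01 h00
  rw [show (β * 3 : ℝ) = 3 * β by ring] at h21
  rw [show (β * 2 : ℝ) = 2 * β by ring] at h20 h11
  rw [← hg3def] at h21
  rw [← hg2def] at h20 h11
  rw [← hg1def] at h10 h01
  have key : (∫ p : ℝ × ℝ,
        (p.1 ^ 4 - c * p.1 ^ 2 + c / g1 - 6 / g2) * (p.2 ^ 2 - e) ∂μ)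
      = ∫ p : ℝ × ℝ, (p.1 ^ 4 * p.2 ^ 2 + ((-e) * (p.1 ^ 4 * p.2 ^ 0) +
          ((-c) * (p.1 ^ 2 * p.2 ^ 2) + ((c * e) * (p.1 ^ 2 * p.2 ^ 0) +
          (d * (p.1 ^ 0 * p.2 ^ 2) + (-(d * e)) * (p.1 ^ 0 * p.2 ^ 0)))))) ∂μ := by
    refine integral_congr_ae (Filter.Eventually.of_forall fun p => ?_)
    simp only [hd, he]
    ring
  have i00 : Integrable (fun p : ℝ × ℝ => (-(d * e)) * (p.1 ^ 0 * p.2 ^ 0)) μ :=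
    (hint 0 0).const_mul _
  have i02 : Integrable (fun p : ℝ × ℝ => d * (p.1 ^ 0 * p.2 ^ 2)) μ :=
    (hint 0 2).const_mul _
  have i20 : Integrable (fun p : ℝ × ℝ => (c * e) * (p.1 ^ 2 * p.2 ^ 0)) μ :=
    (hint 2 0).const_mul _
  have i22 : Integrable (fun p : ℝ × ℝ => (-c) * (p.1 ^ 2 * p.2 ^ 2)) μ :=
    (hint 2 2).const_mul _
  have i40 : Integrable (fun p : ℝ × ℝ => (-e) * (p.1 ^ 4 * p.2 ^ 0)) μ :=
    (hint 4 0).const_mul _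
  have j4 : Integrable (fun p : ℝ × ℝ =>
      d * (p.1 ^ 0 * p.2 ^ 2) + -(d * e) * (p.1 ^ 0 * p.2 ^ 0)) μ := i02.add i00
  have j3 : Integrable (fun p : ℝ × ℝ => c * e * (p.1 ^ 2 * p.2 ^ 0) +
      (d * (p.1 ^ 0 * p.2 ^ 2) + -(d * e) * (p.1 ^ 0 * p.2 ^ 0))) μ := i20.add j4
  have j2 : Integrable (fun p : ℝ × ℝ => -c * (p.1 ^ 2 * p.2 ^ 2) +
      (c * e * (p.1 ^ 2 * p.2 ^ 0) +
        (d * (p.1 ^ 0 * p.2 ^ 2) + -(d * e) * (p.1 ^ 0 * p.2 ^ 0)))) μ := i22.add j3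
  have j1 : Integrable (fun p : ℝ × ℝ => -e * (p.1 ^ 4 * p.2 ^ 0) +
      (-c * (p.1 ^ 2 * p.2 ^ 2) + (c * e * (p.1 ^ 2 * p.2 ^ 0) +
        (d * (p.1 ^ 0 * p.2 ^ 2) + -(d * e) * (p.1 ^ 0 * p.2 ^ 0))))) μ := i40.add j2
  rw [key, integral_add (hint 4 2) j1, integral_add i40 j2, integral_add i22 j3,
      integral_add i20 j4, integral_add i02 i00,
      integral_const_mul, integral_const_mul, integral_const_mul,
      integral_const_mul, integral_const_mul]
  simp only [pow_zero, mul_one, one_mul, integral_const, measure_univ, probReal_univ,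
    ENNReal.toReal_one, smul_eq_mul]
  rw [h21, h20, h11, h10, h01]
  rw [hd, hc, he]
  have hden1' : g1 ^ 2 * 6 - g2 ≠ 0 := by intro h; apply hden1; linarith
  field_simp
  ring
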